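/- Let g ≥ 1, let Y be a symmetric g × g real matrix, and let A be the 2g × 2g block matrix [[I_g + Y², Y], [Y, I_g]]. Then for every real number x ≠ 0, det(x·I_{2g} − A) = x^g · det( ((x−1)²/x)·I_g − Y² ); equivalently, the characteristic polynomial p_A of A satisfies p_A(x) = x^g · p_{Y²}((x−1)²/x) for all x ≠ 0, where p_{Y²} is the characteristic polynomial of Y². -/

import Mathlib

open Matrix Polynomial

lemma my_eval_charpoly {n : Type*} [Fintype n] [DecidableEq n] {R : Type*} [CommRing R]
    (M : Matrix n n R) (x : R) : M.charpoly.eval x = det (x • (1 : Matrix n n R) - M) := by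
  rw [Matrix.charpoly, _root_.eval_det, matPolyEquiv_charmatrix]
  congr 1
  simp only [eval_sub, eval_X, eval_C]
  ext i j
  simp [Matrix.scalar, Matrix.one_apply, Matrix.diagonal_apply, Matrix.smul_apply]

lemma my_key (g : ℕ) (Y : Matrix (Fin g) (Fin g) ℝ) (x : ℝ) :
    det (fromBlocks ((x - 1) • 1 - Y ^ 2) (-Y) (-Y)
        ((x - 1) • (1 : Matrix (Fin g) (Fin g) ℝ))) =
      det ((x - 1) ^ 2 • (1 : Matrix (Fin g) (Fin g) ℝ) - x • Y ^ 2) := by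
  have h1 : Continuous fun x : ℝ => det (fromBlocks ((x - 1) • 1 - Y ^ 2) (-Y) (-Y)
      ((x - 1) • (1 : Matrix (Fin g) (Fin g) ℝ))) :=
    (Continuous.matrix_fromBlocks
      (((continuous_id.sub continuous_const).smul continuous_const).sub continuous_const)
      continuous_const continuous_const
      ((continuous_id.sub continuous_const).smul continuous_const)).matrix_det
  have h2 : Continuous fun x : ℝ =>
      det ((x - 1) ^ 2 • (1 : Matrix (Fin g) (Fin g) ℝ) - x • Y ^ 2) :=
    ((((continuous_id.sub continuous_const).pow 2).smul continuous_const).sub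
      (continuous_id.smul continuous_const)).matrix_det
  have := Continuous.ext_on (dense_compl_singleton (1 : ℝ)) h1 h2 ?_
  · exact congrFun this x
  intro x hx
  have hx1 : x - 1 ≠ 0 := sub_ne_zero.mpr hx
  letI : Invertible ((x - 1) • (1 : Matrix (Fin g) (Fin g) ℝ)) :=
    ⟨(x - 1)⁻¹ • 1, by
      rw [smul_mul_smul_comm, Matrix.one_mul, inv_mul_cancel₀ hx1, one_smul], by
      rw [smul_mul_smul_comm, Matrix.one_mul, mul_inv_cancel₀ hx1, one_smul]⟩
  have hinv : ⅟((x - 1) • (1 : Matrix (Fin g) (Fin g) ℝ)) = (x - 1)⁻¹ • 1 := rfl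
  simp only [det_fromBlocks₂₂, hinv]
  have hBC : (-Y) * ((x - 1)⁻¹ • (1 : Matrix (Fin g) (Fin g) ℝ)) * (-Y)
      = (x - 1)⁻¹ • Y ^ 2 := by
    rw [Matrix.mul_smul, Matrix.mul_one, Matrix.smul_mul, neg_mul_neg, ← sq]
  rw [hBC, det_smul, det_one, mul_one, ← det_smul]
  congr 1
  rw [smul_sub, smul_sub, smul_smul, smul_smul, mul_inv_cancel₀ hx1, ← sq, sub_sub, one_smul]
  congr 1
  module

theorem charpoly_blockMatrix_eval (g : ℕ) (hg : 1 ≤ g) (Y : Matrix (Fin g) (Fin g) ℝ)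
    (hY : Y.IsSymm) (x : ℝ) (hx : x ≠ 0) :
    det (x • (1 : Matrix (Fin g ⊕ Fin g) (Fin g ⊕ Fin g) ℝ) -
          Matrix.fromBlocks (1 + Y ^ 2) Y Y 1) =
        x ^ g * det (((x - 1) ^ 2 / x) • (1 : Matrix (Fin g) (Fin g) ℝ) - Y ^ 2) ∧
      (Matrix.fromBlocks (1 + Y ^ 2) Y Y 1).charpoly.eval x =
        x ^ g * (Y ^ 2).charpoly.eval ((x - 1) ^ 2 / x) := by
  have hblock : x • (1 : Matrix (Fin g ⊕ Fin g) (Fin g ⊕ Fin g) ℝ) -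
      Matrix.fromBlocks (1 + Y ^ 2) Y Y 1 =
      fromBlocks ((x - 1) • 1 - Y ^ 2) (-Y) (-Y)
        ((x - 1) • (1 : Matrix (Fin g) (Fin g) ℝ)) := by
    ext i j
    cases i <;> cases j <;>
      simp [Matrix.fromBlocks, Matrix.one_apply, Matrix.smul_apply, sub_smul, Matrix.sub_apply,
        Matrix.add_apply, Matrix.neg_apply] <;> split <;> ring
  have hrhs : x ^ g * det (((x - 1) ^ 2 / x) • (1 : Matrix (Fin g) (Fin g) ℝ) - Y ^ 2) =
      det ((x - 1) ^ 2 • (1 : Matrix (Fin g) (Fin g) ℝ) - x • Y ^ 2) := by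
    have hds : x ^ g * det (((x - 1) ^ 2 / x) • (1 : Matrix (Fin g) (Fin g) ℝ) - Y ^ 2) =
        det (x • (((x - 1) ^ 2 / x) • (1 : Matrix (Fin g) (Fin g) ℝ) - Y ^ 2)) := by
      rw [det_smul, Fintype.card_fin]
    rw [hds, smul_sub, smul_smul, mul_div_cancel₀ _ hx]
  have hmain : det (x • (1 : Matrix (Fin g ⊕ Fin g) (Fin g ⊕ Fin g) ℝ) -
      Matrix.fromBlocks (1 + Y ^ 2) Y Y 1) =
      x ^ g * det (((x - 1) ^ 2 / x) • (1 : Matrix (Fin g) (Fin g) ℝ) - Y ^ 2) := by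
    rw [hblock, hrhs, my_key]
  exact ⟨hmain, by rw [my_eval_charpoly, my_eval_charpoly, hmain]⟩
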